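/- arXiv:2104.01739 — 2 statements merged into one kernel-verified Lean document; each statement's English description precedes it below -/
import Mathlib

section
/- Let n ≥ m ≥ 2 and let G = Γ_{n,m} be the n × m grid graph. Every set S ⊆ V(G) with |∂_G(S)| ≤ m − 1 satisfies |S| ≤ m(m−1)/2 or |S| ≥ mn − (m−2)(m−1)/2. -/
open SimpleGraph


namespace Inspection

variable {V : Type*} {W : Type*}

/-- The boundary of a vertex set `X`: vertices of `X` having a neighbor outside `X`. -/
def boundary (G : SimpleGraph V) (X : Set V) : Set V :=
  {v | v ∈ X ∧ ∃ w, w ∉ X ∧ G.Adj v w}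

/-- The set of neighbors of a vertex set `X`. -/
def nbrSet (G : SimpleGraph V) (X : Set V) : Set V :=
  {v | ∃ u ∈ X, G.Adj u v}

/-- The fully cleared sets of a search `S` (indexed so that turn `t ≥ 1` inspects `S t`):
`FC 0 = ∅`, and `FC (t+1) = PC (t+1) \ ∂(PC (t+1))` where `PC (t+1) = FC t ∪ S (t+1)`. -/
def FC (G : SimpleGraph V) (S : ℕ → Set V) : ℕ → Set V
  | 0 => ∅
  | t + 1 => (FC G S t ∪ S (t + 1)) \ boundary G (FC G S t ∪ S (t + 1))

/-- There is a successful `k`-search on `G`: a finite sequence `S 1, ..., S ℓ` of sets of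
size at most `k` whose final fully cleared set is all of `V`. -/
def SuccessfulSearch (G : SimpleGraph V) (k : ℕ) : Prop :=
  ∃ (ℓ : ℕ) (S : ℕ → Set V),
    (∀ t, 1 ≤ t → t ≤ ℓ → (S t).ncard ≤ k) ∧ FC G S ℓ = Set.univ

/-- The inspection number of `G`: the least `k` admitting a successful `k`-search. -/
noncomputable def inspectionNumber (G : SimpleGraph V) : ℕ :=
  sInf {k | SuccessfulSearch G k}

/-- There is a successful monotonic `k`-search on `G`. -/
def SuccessfulMonotonicSearch (G : SimpleGraph V) (k : ℕ) : Prop :=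
  ∃ (ℓ : ℕ) (S : ℕ → Set V),
    (∀ t, 1 ≤ t → t ≤ ℓ → (S t).ncard ≤ k) ∧
    (∀ i j, i ≤ j → j ≤ ℓ → FC G S i ⊆ FC G S j) ∧
    FC G S ℓ = Set.univ

/-- The monotonic inspection number of `G`. -/
noncomputable def monoInspectionNumber (G : SimpleGraph V) : ℕ :=
  sInf {k | SuccessfulMonotonicSearch G k}

/-- A path decomposition `X 1, ..., X ℓ` of `G`: every edge is contained in some bag, and
for `i ≤ j ≤ k` we have `X i ∩ X k ⊆ X j`. -/
def IsPathDecomp (G : SimpleGraph V) (ℓ : ℕ) (X : ℕ → Set V) : Prop :=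
  (∀ u v : V, G.Adj u v → ∃ i, 1 ≤ i ∧ i ≤ ℓ ∧ u ∈ X i ∧ v ∈ X i) ∧
  (∀ i j k, 1 ≤ i → i ≤ j → j ≤ k → k ≤ ℓ → X i ∩ X k ⊆ X j)

/-- The pathwidth of `G`: the least `w` such that `G` has a path decomposition all of whose
bags have size at most `w + 1`. -/
noncomputable def pathwidth (G : SimpleGraph V) : ℕ :=
  sInf {w | ∃ (ℓ : ℕ) (X : ℕ → Set V), IsPathDecomp G ℓ X ∧
    ∀ i, 1 ≤ i → i ≤ ℓ → (X i).ncard ≤ w + 1}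

/-- Witness data exhibiting `H` as a subdivision of `G`: an injection `f` of the vertices of
`G` into those of `H` and, for each edge of `G`, a path of `H` between the images of its
endpoints, these paths being internally disjoint from each other and from the image of `f`,
and jointly covering all vertices and edges of `H`. -/
structure SubdivisionData (G : SimpleGraph V) (H : SimpleGraph W) where
  f : V → W
  inj : Function.Injective f
  walk : ∀ {u v : V}, G.Adj u v → H.Walk (f u) (f v)
  isPath : ∀ {u v : V} (h : G.Adj u v), (walk h).IsPath
  symm : ∀ {u v : V} (h : G.Adj u v), walk h.symm = (walk h).reverse
  disj : ∀ {u v x y : V} (h₁ : G.Adj u v) (h₂ : G.Adj x y), s(u, v) ≠ s(x, y) →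
      ∀ w : W, w ∈ (walk h₁).support → w ∈ (walk h₂).support → w ∈ Set.range f
  branch : ∀ {u v : V} (h : G.Adj u v) (w : W),
      w ∈ (walk h).support → w ∈ Set.range f → w = f u ∨ w = f v
  cover_vert : ∀ w : W, w ∈ Set.range f ∨ ∃ (u v : V) (h : G.Adj u v), w ∈ (walk h).support
  cover_edge : ∀ e ∈ H.edgeSet, ∃ (u v : V) (h : G.Adj u v), e ∈ (walk h).edges

/-- `H` is a subdivision of `G`. -/
def IsSubdivision (G : SimpleGraph V) (H : SimpleGraph W) : Prop :=
  Nonempty (SubdivisionData G H)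

/-- The topological inspection number of `G`: the least `k` such that every subdivision of
`G` has a further subdivision with inspection number at most `k`. -/
noncomputable def topInspectionNumber (G : SimpleGraph V) : ℕ :=
  sInf {k | ∀ (W' : Type) (H : SimpleGraph W'), IsSubdivision G H →
    ∃ (W'' : Type) (H' : SimpleGraph W''), IsSubdivision H H' ∧ inspectionNumber H' ≤ k}


/-- The `n × m` grid graph: vertices `(i,j)` with `0 ≤ i < n`, `0 ≤ j < m`, and
`(a,b)` adjacent to `(c,d)` iff `|a−c| + |b−d| = 1`. -/
def gridGraph (n m : ℕ) : SimpleGraph (Fin n × Fin m) where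
  Adj a b := |(a.1 : ℤ) - (b.1 : ℤ)| + |(a.2 : ℤ) - (b.2 : ℤ)| = 1
  symm := by
    constructor
    intro a b h
    rw [abs_sub_comm ((b.1 : ℤ)) ((a.1 : ℤ)), abs_sub_comm ((b.2 : ℤ)) ((a.2 : ℤ))]
    exact h
  loopless := by constructor; intro a h; simp at h

private def tri : ℕ → ℕ
  | 0 => 0
  | k+1 => tri k + (k+1)

private lemma tri_mono {a b : ℕ} (h : a ≤ b) : tri a ≤ tri b := by
  induction b with
  | zero =>
    have ha : a = 0 := by omega
    simp [ha]
  | succ b ih =>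
    rcases Nat.lt_or_ge a (b+1) with h' | h'
    · exact le_trans (ih (by omega)) (by simp [tri])
    · have : a = b + 1 := by omega
      simp [this]

private lemma tri_step (v d : ℕ) (hd : 1 ≤ d) : tri v + v + d ≤ tri (v + d) := by
  induction d with
  | zero => omega
  | succ d ih =>
    rcases Nat.eq_zero_or_pos d with h | h
    · subst h; simp [show v + 1 = v + 1 from rfl, tri]
    · have := ih h
      have h2 : tri (v + d + 1) = tri (v + d) + (v + d + 1) := rfl
      have h3 : v + (d + 1) = v + d + 1 := by omega
      rw [h3]
      omega

private lemma tri_add_le (a b : ℕ) : tri a + tri b ≤ tri (a + b) := by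
  induction b with
  | zero => simp [tri]
  | succ b ih =>
    have h1 : tri (b+1) = tri b + (b+1) := rfl
    have h2 : tri (a+b+1) = tri (a+b) + (a+b+1) := rfl
    have h3 : a + (b+1) = a + b + 1 := by omega
    rw [h3, h2, h1]; omega

private lemma tri_two (k : ℕ) : 2 * tri k = k * (k+1) := by
  induction k with
  | zero => simp [tri]
  | succ k ih =>
    have h1 : tri (k+1) = tri k + (k+1) := rfl
    have h2 : (k+1) * (k+1+1) = k * (k+1) + 2*(k+1) := by ring
    omega

private lemma nat_ivt {p : ℕ → Prop} {a c : ℕ} (hac : a ≤ c) (ha : p a) (hc : ¬ p c) :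
    ∃ k, a ≤ k ∧ k < c ∧ p k ∧ ¬ p (k+1) := by
  by_contra hno
  push_neg at hno
  apply hc
  have key : ∀ x, a ≤ x → x ≤ c → p x := by
    intro x hx
    induction x, hx using Nat.le_induction with
    | base => intro _; exact ha
    | succ x hx ih =>
      intro hxc
      exact hno x hx (by omega) (ih (by omega))
  exact key c hac le_rfl

private lemma passUp (c w : ℕ → ℕ) (α e : ℕ) (hαe : α ≤ e) (h0 : c α = 0)
    (hch : ∀ r, α ≤ r → r < e → c (r+1) ≤ w r + c r)
    (hw : ∀ r, α ≤ r → r < e → 0 < c (r+1) → 1 ≤ w r) :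
    ∑ i ∈ Finset.Ico α (e+1), c i ≤ tri (∑ k ∈ Finset.Ico α e, w k) := by
  have aux : ∀ r, α ≤ r → r ≤ e → c r ≤ ∑ k ∈ Finset.Ico α r, w k := by
    intro r hr
    induction r, hr using Nat.le_induction with
    | base => intro _; simp [h0]
    | succ r hr ih =>
      intro hre
      have h1 : c (r+1) ≤ w r + c r := hch r hr (by omega)
      have h2 := ih (by omega)
      have h3 : ∑ k ∈ Finset.Ico α (r+1), w k = (∑ k ∈ Finset.Ico α r, w k) + w r :=
        Finset.sum_Ico_succ_top hr w
      omega
  have main : ∀ e', α ≤ e' → e' ≤ e →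
      ∑ i ∈ Finset.Ico α (e'+1), c i ≤ tri (∑ k ∈ Finset.Ico α e', w k) := by
    intro e' he'
    induction e', he' using Nat.le_induction with
    | base => intro _; simp [h0]
    | succ e' he' ih =>
      intro hee
      have ih' := ih (by omega)
      have hs1 : ∑ i ∈ Finset.Ico α (e'+1+1), c i
          = (∑ i ∈ Finset.Ico α (e'+1), c i) + c (e'+1) :=
        Finset.sum_Ico_succ_top (by omega) c
      have hs2 : ∑ k ∈ Finset.Ico α (e'+1), w k = (∑ k ∈ Finset.Ico α e', w k) + w e' :=
        Finset.sum_Ico_succ_top he' w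
      rw [hs1, hs2]
      rcases Nat.eq_zero_or_pos (c (e'+1)) with h | h
      · have := tri_mono (show (∑ k ∈ Finset.Ico α e', w k) ≤ (∑ k ∈ Finset.Ico α e', w k) + w e' by omega)
        omega
      · have hw1 : 1 ≤ w e' := hw e' he' (by omega) h
        have hc1 : c (e'+1) ≤ w e' + c e' := hch e' he' (by omega)
        have hc2 : c e' ≤ ∑ k ∈ Finset.Ico α e', w k := aux e' he' (by omega)
        have := tri_step (∑ k ∈ Finset.Ico α e', w k) (w e') hw1
        omega
  exact main e hαe le_rfl

private lemma passDown (c w : ℕ → ℕ) (l α : ℕ) (hlα : l ≤ α) (h0 : c α = 0)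
    (hch : ∀ r, l ≤ r → r < α → c r ≤ w r + c (r+1))
    (hw : ∀ r, l ≤ r → r < α → 0 < c r → 1 ≤ w r) :
    ∑ i ∈ Finset.Ico l (α+1), c i ≤ tri (∑ k ∈ Finset.Ico l α, w k) := by
  have aux : ∀ d, d ≤ α - l → c (α - d) ≤ ∑ k ∈ Finset.Ico (α - d) α, w k := by
    intro d
    induction d with
    | zero => intro _; simp [h0]
    | succ d ih =>
      intro hd
      have h1 : c (α - (d+1)) ≤ w (α - (d+1)) + c (α - (d+1) + 1) := hch _ (by omega) (by omega)
      have h3 : α - (d+1) + 1 = α - d := by omega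
      have h2 := ih (by omega)
      have h4 : ∑ k ∈ Finset.Ico (α - (d+1)) α, w k
          = w (α - (d+1)) + ∑ k ∈ Finset.Ico (α - (d+1) + 1) α, w k :=
        Finset.sum_eq_sum_Ico_succ_bot (by omega) w
      rw [h3] at h1 h4
      omega
  have main : ∀ d, d ≤ α - l →
      ∑ i ∈ Finset.Ico (α - d) (α+1), c i ≤ tri (∑ k ∈ Finset.Ico (α - d) α, w k) := by
    intro d
    induction d with
    | zero => intro _; simp [h0]
    | succ d ih =>
      intro hd
      have ih' := ih (by omega)
      have h3 : α - (d+1) + 1 = α - d := by omega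
      have hs1 : ∑ i ∈ Finset.Ico (α - (d+1)) (α+1), c i
          = c (α - (d+1)) + ∑ i ∈ Finset.Ico (α - (d+1) + 1) (α+1), c i :=
        Finset.sum_eq_sum_Ico_succ_bot (by omega) c
      have hs2 : ∑ k ∈ Finset.Ico (α - (d+1)) α, w k
          = w (α - (d+1)) + ∑ k ∈ Finset.Ico (α - (d+1) + 1) α, w k :=
        Finset.sum_eq_sum_Ico_succ_bot (by omega) w
      rw [h3] at hs1 hs2
      rw [hs1, hs2, Nat.add_comm (w (α - (d+1))) (∑ k ∈ Finset.Ico (α-d) α, w k)]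
      rcases Nat.eq_zero_or_pos (c (α - (d+1))) with h | h
      · have := tri_mono (show (∑ k ∈ Finset.Ico (α-d) α, w k) ≤ (∑ k ∈ Finset.Ico (α-d) α, w k) + w (α - (d+1)) by omega)
        omega
      · have hw1 : 1 ≤ w (α - (d+1)) := hw _ (by omega) (by omega) h
        have hc2 := aux (d+1) hd
        have hc2' : c (α - (d+1)) ≤ w (α - (d+1)) + ∑ k ∈ Finset.Ico (α - d) α, w k := by omega
        have := tri_step (∑ k ∈ Finset.Ico (α - d) α, w k) (w (α - (d+1))) hw1
        omega
  have := main (α - l) (le_rfl)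
  rwa [show α - (α - l) = l by omega] at this

private lemma sum_shift (f : ℕ → ℕ) (a c : ℕ) :
    ∑ r ∈ Finset.Ico a c, f (r+1) = ∑ k ∈ Finset.Ico (a+1) (c+1), f k := by
  induction c with
  | zero => simp
  | succ c ih =>
    rcases Nat.lt_or_ge c a with h | h
    · rw [Finset.Ico_eq_empty (by omega), Finset.Ico_eq_empty (by omega)]
      simp
    · rw [Finset.sum_Ico_succ_top h, Finset.sum_Ico_succ_top (by omega), ih]

open SimpleGraph
open Classical in
/-- the rows occupied by `A` in (1-based) column `k`. -/
private noncomputable def colset (n m : ℕ) (A : Set (Fin n × Fin m)) (k : ℕ) :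
    Finset (Fin m) :=
  Finset.univ.filter (fun j => ∃ v : Fin n × Fin m, v ∈ A ∧ (v.1 : ℕ) + 1 = k ∧ v.2 = j)

private lemma mem_colset {n m : ℕ} {A : Set (Fin n × Fin m)} {k : ℕ} {j : Fin m} :
    j ∈ colset n m A k ↔ ∃ v : Fin n × Fin m, v ∈ A ∧ (v.1 : ℕ) + 1 = k ∧ v.2 = j := by
  simp [colset]

private lemma mem_colset' {n m : ℕ} {A : Set (Fin n × Fin m)} {i : Fin n} {j : Fin m}
    (h : ((i, j) : Fin n × Fin m) ∈ A) : j ∈ colset n m A ((i : ℕ) + 1) :=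
  mem_colset.2 ⟨(i, j), h, rfl, rfl⟩

private lemma card_colsum {n m : ℕ} (A : Set (Fin n × Fin m)) :
    A.ncard = ∑ k ∈ Finset.Ico 1 (n+1), (colset n m A k).card := by
  classical
  rw [Set.ncard_eq_toFinset_card A A.toFinite]
  rw [Finset.card_eq_sum_card_fiberwise
    (f := fun v : Fin n × Fin m => (v.1 : ℕ) + 1) (t := Finset.Ico 1 (n+1))
    (fun v _ => by simp [Finset.mem_Ico])]
  apply Finset.sum_congr rfl
  intro k _
  apply Finset.card_bij (fun v _ => v.2)
  · intro v hv
    simp only [Finset.mem_filter, Set.Finite.mem_toFinset] at hv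
    exact mem_colset.2 ⟨v, hv.1, hv.2, rfl⟩
  · intro v hv v' hv' h
    simp only [Finset.mem_filter, Set.Finite.mem_toFinset] at hv hv'
    have : (v.1 : ℕ) = (v'.1 : ℕ) := by omega
    exact Prod.ext (Fin.ext this) h
  · intro j hj
    obtain ⟨v, hvA, hvk, hvj⟩ := mem_colset.1 hj
    exact ⟨v, by simp only [Finset.mem_filter, Set.Finite.mem_toFinset]; exact ⟨hvA, hvk⟩, hvj⟩

private lemma grid_adj_h {n m : ℕ} {i i' : Fin n} {j : Fin m} (h : (i:ℕ) + 1 = (i':ℕ)) :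
    (gridGraph n m).Adj (i, j) (i', j) := by
  show |((i : ℤ)) - ((i' : ℤ))| + |((j:ℤ)) - ((j:ℤ))| = 1
  rw [show ((i : ℤ)) - ((i' : ℤ)) = -1 by omega]
  simp

private lemma grid_adj_v {n m : ℕ} {i : Fin n} {j j' : Fin m} (h : (j:ℕ) + 1 = (j':ℕ)) :
    (gridGraph n m).Adj (i, j) (i, j') := by
  show |((i : ℤ)) - ((i : ℤ))| + |((j:ℤ)) - ((j':ℤ))| = 1
  rw [show ((j : ℤ)) - ((j' : ℤ)) = -1 by omega]
  simp

private lemma mem_bdry {n m : ℕ} {S : Set (Fin n × Fin m)} {v w : Fin n × Fin m}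
    (hv : v ∈ S) (hw : w ∉ S) (hadj : (gridGraph n m).Adj v w) :
    v ∈ boundary (gridGraph n m) S := ⟨hv, w, hw, hadj⟩

section Chains
variable {n m : ℕ} {S : Set (Fin n × Fin m)}

/-- own-column witness, moving left : `T r ⊆ T (r+1) ∪ Bv r`. -/
private lemma chain_S_left {r : ℕ} (hr : r + 1 ≤ n) :
    colset n m S r ⊆ colset n m S (r+1) ∪ colset n m (boundary (gridGraph n m) S) r := by
  intro j hj
  obtain ⟨v, hvS, hvk, hvj⟩ := mem_colset.1 hj
  have hlt : (v.1 : ℕ) + 1 < n := by omega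
  set i' : Fin n := ⟨(v.1 : ℕ) + 1, hlt⟩ with hi'
  by_cases h : ((i', v.2) : Fin n × Fin m) ∈ S
  · exact Finset.mem_union_left _ (mem_colset.2 ⟨(i', v.2), h, by simp [hi']; omega, hvj⟩)
  · refine Finset.mem_union_right _ (mem_colset.2 ⟨v, ?_, hvk, hvj⟩)
    have hadj : (gridGraph n m).Adj (v.1, v.2) (i', v.2) := grid_adj_h (by simp [hi'])
    exact mem_bdry hvS h hadj

/-- own-column witness, moving right : `T (r+1) ⊆ T r ∪ Bv (r+1)`, for `1 ≤ r`. -/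
private lemma chain_S_right {r : ℕ} (hr : 1 ≤ r) :
    colset n m S (r+1) ⊆ colset n m S r ∪ colset n m (boundary (gridGraph n m) S) (r+1) := by
  intro j hj
  obtain ⟨v, hvS, hvk, hvj⟩ := mem_colset.1 hj
  have h0 : 1 ≤ (v.1 : ℕ) := by omega
  have hlt : (v.1 : ℕ) - 1 < n := by have := v.1.isLt; omega
  set i' : Fin n := ⟨(v.1 : ℕ) - 1, hlt⟩ with hi'
  by_cases h : ((i', v.2) : Fin n × Fin m) ∈ S
  · exact Finset.mem_union_left _ (mem_colset.2 ⟨(i', v.2), h, by simp [hi']; omega, hvj⟩)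
  · refine Finset.mem_union_right _ (mem_colset.2 ⟨v, ?_, hvk, hvj⟩)
    have hadj : (gridGraph n m).Adj (v.1, v.2) (i', v.2) :=
      ((grid_adj_h (by simp [hi']; omega)).symm : _)
    exact mem_bdry hvS h hadj

/-- neighbour-column witness, moving left: `X (r+1) ⊆ X r ∪ Bv r`, for `1 ≤ r`. -/
private lemma chain_X_right {r : ℕ} (hr : 1 ≤ r) :
    colset n m Sᶜ (r+1) ⊆ colset n m Sᶜ r ∪ colset n m (boundary (gridGraph n m) S) r := by
  intro j hj
  obtain ⟨v, hvS, hvk, hvj⟩ := mem_colset.1 hj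
  have h0 : 1 ≤ (v.1 : ℕ) := by omega
  have hlt : (v.1 : ℕ) - 1 < n := by have := v.1.isLt; omega
  set i' : Fin n := ⟨(v.1 : ℕ) - 1, hlt⟩ with hi'
  by_cases h : ((i', v.2) : Fin n × Fin m) ∈ S
  · refine Finset.mem_union_right _ (mem_colset.2 ⟨(i', v.2), ?_, by simp [hi']; omega, hvj⟩)
    have hadj : (gridGraph n m).Adj (i', v.2) (v.1, v.2) := grid_adj_h (by simp [hi']; omega)
    exact mem_bdry h hvS hadj
  · exact Finset.mem_union_left _ (mem_colset.2 ⟨(i', v.2), h, by simp [hi']; omega, hvj⟩)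

/-- neighbour-column witness, moving right: `X r ⊆ X (r+1) ∪ Bv (r+1)`. -/
private lemma chain_X_left {r : ℕ} (hr : r + 1 ≤ n) :
    colset n m Sᶜ r ⊆ colset n m Sᶜ (r+1) ∪ colset n m (boundary (gridGraph n m) S) (r+1) := by
  intro j hj
  obtain ⟨v, hvS, hvk, hvj⟩ := mem_colset.1 hj
  have hlt : (v.1 : ℕ) + 1 < n := by omega
  set i' : Fin n := ⟨(v.1 : ℕ) + 1, hlt⟩ with hi'
  by_cases h : ((i', v.2) : Fin n × Fin m) ∈ S
  · refine Finset.mem_union_right _ (mem_colset.2 ⟨(i', v.2), ?_, by simp [hi']; omega, hvj⟩)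
    have hadj : (gridGraph n m).Adj (i', v.2) (v.1, v.2) :=
      ((grid_adj_h (by simp [hi'])).symm : _)
    exact mem_bdry h hvS hadj
  · exact Finset.mem_union_left _ (mem_colset.2 ⟨(i', v.2), h, by simp [hi']; omega, hvj⟩)

/-- a mixed column contains a boundary vertex. -/
private lemma col_bd_pos {k : ℕ} (h1 : (colset n m S k).Nonempty)
    (h2 : (colset n m Sᶜ k).Nonempty) :
    0 < (colset n m (boundary (gridGraph n m) S) k).card := by
  obtain ⟨j1, hj1⟩ := h1
  obtain ⟨j2, hj2⟩ := h2
  obtain ⟨v1, hv1, hk1, hj1'⟩ := mem_colset.1 hj1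
  obtain ⟨v2, hv2, hk2, hj2'⟩ := mem_colset.1 hj2
  have hcol : v1.1 = v2.1 := Fin.ext (by omega)
  set p : ℕ → Prop := fun t => ∃ h : t < m, ((v1.1, (⟨t, h⟩ : Fin m)) : Fin n × Fin m) ∈ S
    with hp
  have hp1 : p (v1.2 : ℕ) := ⟨v1.2.isLt, by simpa using hv1⟩
  have hp2 : ¬ p (v2.2 : ℕ) := by
    rintro ⟨h, hmem⟩
    apply hv2
    rw [show ((v1.1, (⟨(v2.2 : ℕ), h⟩ : Fin m)) : Fin n × Fin m) = v2 by
      rw [hcol]] at hmem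
    exact hmem
  rw [Finset.card_pos]
  rcases Nat.lt_or_ge (v1.2 : ℕ) (v2.2 : ℕ) with hlt | hge
  · obtain ⟨t, _, htc, hpt, hpt1⟩ := nat_ivt (le_of_lt hlt) hp1 hp2
    have htm : t < m := by have := v2.2.isLt; omega
    have htm1 : t + 1 < m := by have := v2.2.isLt; omega
    obtain ⟨_, hx⟩ := hpt
    have hy : ((v1.1, (⟨t+1, htm1⟩ : Fin m)) : Fin n × Fin m) ∉ S := fun hmem => hpt1 ⟨htm1, hmem⟩
    refine ⟨(⟨t, htm⟩ : Fin m), mem_colset.2 ⟨(v1.1, ⟨t, htm⟩), ?_, by simpa using hk1, rfl⟩⟩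
    exact mem_bdry hx hy (grid_adj_v (by simp))
  · have hne : (v1.2 : ℕ) ≠ (v2.2 : ℕ) := fun h => hp2 (h ▸ hp1)
    obtain ⟨t, _, htc, hpt, hpt1⟩ := nat_ivt (p := fun t => ¬ p t) (show (v2.2:ℕ) ≤ (v1.2:ℕ) by omega) hp2
      (not_not.2 hp1)
    have htm : t < m := by have := v1.2.isLt; omega
    have htm1 : t + 1 < m := by have := v1.2.isLt; omega
    obtain ⟨_, hx⟩ := not_not.1 hpt1
    have hy : ((v1.1, (⟨t, htm⟩ : Fin m)) : Fin n × Fin m) ∉ S := fun hmem => hpt ⟨htm, hmem⟩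
    refine ⟨(⟨t+1, htm1⟩ : Fin m), mem_colset.2 ⟨(v1.1, ⟨t+1, htm1⟩), ?_, by simpa using hk1, rfl⟩⟩
    exact mem_bdry hx hy ((grid_adj_v (by simp)).symm)

end Chains
section Main
variable {n m : ℕ} {S : Set (Fin n × Fin m)}

private lemma colset_real {A : Set (Fin n × Fin m)} {k : ℕ}
    (h : (colset n m A k).Nonempty) : 1 ≤ k ∧ k ≤ n := by
  obtain ⟨j, hj⟩ := h
  obtain ⟨v, _, hk, _⟩ := mem_colset.1 hj
  have := v.1.isLt
  omega

private lemma no_empty_col (hm : 2 ≤ m)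
    (hb : (boundary (gridGraph n m) S).ncard ≤ m - 1)
    {α : ℕ} (hα1 : 1 ≤ α) (hα2 : α ≤ n) (hα : colset n m Sᶜ α = ∅) :
    ∀ k, 1 ≤ k → k ≤ n → (colset n m S k).Nonempty := by
  by_contra hcon
  push_neg at hcon
  obtain ⟨ε, hε1, hε2, hε⟩ := hcon
  set iα : Fin n := ⟨α - 1, by omega⟩ with hiα
  set iε : Fin n := ⟨ε - 1, by omega⟩ with hiε
  have hαS : ∀ j : Fin m, ((iα, j) : Fin n × Fin m) ∈ S := by
    intro j
    by_contra h
    have : j ∈ colset n m Sᶜ α := by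
      refine mem_colset.2 ⟨(iα, j), h, by simp [hiα]; omega, rfl⟩
    simp [hα] at this
  have hεS : ∀ j : Fin m, ((iε, j) : Fin n × Fin m) ∉ S := by
    intro j h
    have : j ∈ colset n m S ε := mem_colset.2 ⟨(iε, j), h, by simp [hiε]; omega, rfl⟩
    simp [hε] at this
  have hex : ∀ j : Fin m, ∃ v : Fin n × Fin m,
      v ∈ boundary (gridGraph n m) S ∧ v.2 = j := by
    intro j
    set p : ℕ → Prop := fun t => ∃ h : t < n, (((⟨t, h⟩ : Fin n), j) : Fin n × Fin m) ∈ S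
      with hp
    have hpα : p ((iα : ℕ)) := ⟨iα.isLt, by simpa using hαS j⟩
    have hpε : ¬ p ((iε : ℕ)) := by
      rintro ⟨h, hmem⟩
      exact hεS j (by convert hmem using 2 <;> simp [hiε])
    rcases Nat.lt_or_ge (iα : ℕ) (iε : ℕ) with hlt | hge
    · obtain ⟨t, _, htc, hpt, hpt1⟩ := nat_ivt (le_of_lt hlt) hpα hpε
      have htn : t < n := by have := iε.isLt; omega
      have htn1 : t + 1 < n := by have := iε.isLt; omega
      obtain ⟨_, hx⟩ := hpt
      have hy : (((⟨t+1, htn1⟩ : Fin n), j) : Fin n × Fin m) ∉ S :=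
        fun hmem => hpt1 ⟨htn1, hmem⟩
      exact ⟨(⟨t, htn⟩, j), mem_bdry hx hy (grid_adj_h (by simp)), rfl⟩
    · have hne : (iα : ℕ) ≠ (iε : ℕ) := by
        intro h
        exact hpε (h ▸ hpα)
      obtain ⟨t, _, htc, hpt, hpt1⟩ := nat_ivt (p := fun t => ¬ p t)
        (show (iε:ℕ) ≤ (iα:ℕ) by omega) hpε (not_not.2 hpα)
      have htn : t < n := by have := iα.isLt; omega
      have htn1 : t + 1 < n := by have := iα.isLt; omega
      obtain ⟨_, hx⟩ := not_not.1 hpt1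
      have hy : (((⟨t, htn⟩ : Fin n), j) : Fin n × Fin m) ∉ S :=
        fun hmem => hpt ⟨htn, hmem⟩
      exact ⟨(⟨t+1, htn1⟩, j), mem_bdry hx hy ((grid_adj_h (by simp)).symm), rfl⟩
  choose g hg1 hg2 using hex
  have hinj : Set.InjOn g (Finset.univ : Finset (Fin m)) := by
    intro j1 _ j2 _ h
    rw [← hg2 j1, ← hg2 j2, h]
  have hcard : (Finset.univ : Finset (Fin m)).card
      ≤ ((boundary (gridGraph n m) S).toFinite.toFinset).card := by
    apply Finset.card_le_card_of_injOn g
    · intro j _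
      simp only [Finset.mem_coe, Set.Finite.mem_toFinset]
      exact hg1 j
    · exact hinj
  rw [Finset.card_univ, Fintype.card_fin] at hcard
  rw [Set.ncard_eq_toFinset_card _ (boundary (gridGraph n m) S).toFinite] at hb
  omega

private lemma full_witness_right {α : ℕ} (hα1 : 1 ≤ α) (hα2 : α ≤ n)
    (hα : colset n m Sᶜ α = ∅) :
    colset n m Sᶜ (α+1) ⊆ colset n m (boundary (gridGraph n m) S) α := by
  intro j hj
  obtain ⟨v, hvS, hvk, hvj⟩ := mem_colset.1 hj
  have h1 : 1 ≤ (v.1 : ℕ) := by omega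
  have hlt : (v.1 : ℕ) - 1 < n := by have := v.1.isLt; omega
  set w : Fin n × Fin m := (⟨(v.1 : ℕ) - 1, hlt⟩, v.2) with hw
  have hwS : w ∈ S := by
    by_contra h
    have : v.2 ∈ colset n m Sᶜ α := mem_colset.2 ⟨w, h, by simp [hw]; omega, rfl⟩
    simp [hα] at this
  have hadj : (gridGraph n m).Adj w (v.1, v.2) := grid_adj_h (by simp [hw]; omega)
  exact mem_colset.2 ⟨w, mem_bdry hwS hvS hadj, by simp [hw]; omega, hvj⟩

private lemma full_witness_left {α : ℕ} (hα1 : 1 ≤ α) (hα2 : α ≤ n)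
    (hα : colset n m Sᶜ α = ∅) :
    colset n m Sᶜ (α-1) ⊆ colset n m (boundary (gridGraph n m) S) α := by
  intro j hj
  obtain ⟨v, hvS, hvk, hvj⟩ := mem_colset.1 hj
  have h1 : 2 ≤ α := by omega
  have hlt : (v.1 : ℕ) + 1 < n := by omega
  set w : Fin n × Fin m := (⟨(v.1 : ℕ) + 1, hlt⟩, v.2) with hw
  have hwS : w ∈ S := by
    by_contra h
    have : v.2 ∈ colset n m Sᶜ α := mem_colset.2 ⟨w, h, by simp [hw]; omega, rfl⟩
    simp [hα] at this
  have hadj : (gridGraph n m).Adj w (v.1, v.2) := (grid_adj_h (by simp [hw])).symm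
  exact mem_colset.2 ⟨w, mem_bdry hwS hvS hadj, by simp [hw]; omega, hvj⟩

private lemma good_anchor (hm : 2 ≤ m) (hmn : m ≤ n)
    (hb : (boundary (gridGraph n m) S).ncard ≤ m - 1)
    (hfull : ∃ α, 1 ≤ α ∧ α ≤ n ∧ colset n m Sᶜ α = ∅) :
    ∃ α, 1 ≤ α ∧ α ≤ n ∧ colset n m Sᶜ α = ∅ ∧
      colset n m Sᶜ (α-1) ∩ colset n m Sᶜ (α+1) = ∅ := by
  obtain ⟨α0, h01, h02, h0⟩ := hfull
  by_contra hno
  push_neg at hno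
  have hbpos : ∀ k, 1 ≤ k → k ≤ n →
      0 < (colset n m (boundary (gridGraph n m) S) k).card := by
    intro k hk1 hk2
    by_cases hk : colset n m Sᶜ k = ∅
    · have hne := hno k hk1 hk2 hk
      obtain ⟨j, hj⟩ := hne
      rw [Finset.mem_inter] at hj
      have := full_witness_right hk1 hk2 hk hj.2
      exact Finset.card_pos.2 ⟨j, this⟩
    · exact col_bd_pos (no_empty_col hm hb h01 h02 h0 k hk1 hk2)
        (Finset.nonempty_iff_ne_empty.2 hk)
  have hsum : (n : ℕ) ≤ ∑ k ∈ Finset.Ico 1 (n+1),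
      (colset n m (boundary (gridGraph n m) S) k).card := by
    calc (n : ℕ) = ∑ k ∈ Finset.Ico 1 (n+1), 1 := by simp
    _ ≤ _ := Finset.sum_le_sum (fun k hk => by
        rw [Finset.mem_Ico] at hk
        exact hbpos k hk.1 (by omega))
  rw [← card_colsum] at hsum
  omega

end Main
section Cases
variable {n m : ℕ} {S : Set (Fin n × Fin m)}

private lemma colset_zero (A : Set (Fin n × Fin m)) : colset n m A 0 = ∅ :=
  Finset.eq_empty_of_forall_notMem (fun j hj => by
    obtain ⟨v, _, h, _⟩ := mem_colset.1 hj; omega)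

private noncomputable def bcol (n m : ℕ) (S : Set (Fin n × Fin m)) (k : ℕ) : ℕ :=
  (colset n m (boundary (gridGraph n m) S) k).card

private noncomputable def scol (n m : ℕ) (S : Set (Fin n × Fin m)) (k : ℕ) : ℕ :=
  (colset n m S k).card

private noncomputable def xcol (n m : ℕ) (S : Set (Fin n × Fin m)) (k : ℕ) : ℕ :=
  (colset n m Sᶜ k).card

private lemma scol_chain_left {r : ℕ} (hr : r + 1 ≤ n) :
    scol n m S r ≤ bcol n m S r + scol n m S (r+1) := by
  have h1 := Finset.card_le_card (chain_S_left (S := S) hr)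
  have h2 := Finset.card_union_le (colset n m S (r+1))
    (colset n m (boundary (gridGraph n m) S) r)
  simp only [scol, bcol]
  omega

private lemma scol_chain_right {r : ℕ} (hr : 1 ≤ r) :
    scol n m S (r+1) ≤ bcol n m S (r+1) + scol n m S r := by
  have h1 := Finset.card_le_card (chain_S_right (S := S) hr)
  have h2 := Finset.card_union_le (colset n m S r)
    (colset n m (boundary (gridGraph n m) S) (r+1))
  simp only [scol, bcol]
  omega

private lemma xcol_chain_right {r : ℕ} (hr : 1 ≤ r) :
    xcol n m S (r+1) ≤ bcol n m S r + xcol n m S r := by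
  have h1 := Finset.card_le_card (chain_X_right (S := S) hr)
  have h2 := Finset.card_union_le (colset n m Sᶜ r)
    (colset n m (boundary (gridGraph n m) S) r)
  simp only [xcol, bcol]
  omega

private lemma xcol_chain_left {r : ℕ} (hr : r + 1 ≤ n) :
    xcol n m S r ≤ bcol n m S (r+1) + xcol n m S (r+1) := by
  have h1 := Finset.card_le_card (chain_X_left (S := S) hr)
  have h2 := Finset.card_union_le (colset n m Sᶜ (r+1))
    (colset n m (boundary (gridGraph n m) S) (r+1))
  simp only [xcol, bcol]
  omega

private lemma bcol_pos {k : ℕ} (hs : 0 < scol n m S k) (hx : 0 < xcol n m S k) :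
    1 ≤ bcol n m S k :=
  col_bd_pos (Finset.card_pos.1 hs) (Finset.card_pos.1 hx)

private lemma bcol_sum :
    (boundary (gridGraph n m) S).ncard = ∑ k ∈ Finset.Ico 1 (n+1), bcol n m S k :=
  card_colsum _

private lemma case1 (hm : 2 ≤ m) (hmn : m ≤ n)
    (hb : (boundary (gridGraph n m) S).ncard ≤ m - 1)
    (hnofull : ∀ k, 1 ≤ k → k ≤ n → (colset n m Sᶜ k).Nonempty) :
    S.ncard ≤ tri (m - 1) := by
  have hBsum := bcol_sum (n := n) (m := m) (S := S)
  have hmix : ∀ k, 0 < scol n m S k → 1 ≤ bcol n m S k := by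
    intro k hk
    obtain ⟨hk1, hk2⟩ := colset_real (Finset.card_pos.1 hk)
    exact bcol_pos hk (Finset.card_pos.2 (hnofull k hk1 hk2))
  have hex : ∃ e, 1 ≤ e ∧ e ≤ n ∧ scol n m S e = 0 := by
    by_contra hcon
    push_neg at hcon
    have hsum : (n : ℕ) ≤ ∑ k ∈ Finset.Ico 1 (n+1), bcol n m S k := by
      calc (n : ℕ) = ∑ k ∈ Finset.Ico 1 (n+1), 1 := by simp
      _ ≤ _ := Finset.sum_le_sum (fun k hk => by
          rw [Finset.mem_Ico] at hk
          exact hmix k (Nat.pos_of_ne_zero (hcon k hk.1 (by omega))))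
    omega
  obtain ⟨e, he1, he2, hee⟩ := hex
  have hleft : ∑ i ∈ Finset.Ico 0 (e+1), scol n m S i
      ≤ tri (∑ k ∈ Finset.Ico 0 e, bcol n m S k) := by
    apply passDown (scol n m S) (bcol n m S) 0 e (by omega) hee
    · intro r _ hre
      exact scol_chain_left (by omega)
    · intro r _ _ hpos
      exact hmix r hpos
  have hright : ∑ i ∈ Finset.Ico e (n+1), scol n m S i
      ≤ tri (∑ r ∈ Finset.Ico e n, bcol n m S (r+1)) := by
    apply passUp (scol n m S) (fun r => bcol n m S (r+1)) e n he2 hee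
    · intro r hr _
      exact scol_chain_right (by omega)
    · intro r _ _ hpos
      exact hmix (r+1) hpos
  rw [sum_shift (bcol n m S) e n] at hright
  have hc0 : scol n m S 0 = 0 := by simp [scol, colset_zero]
  have hb0 : bcol n m S 0 = 0 := by simp [bcol, colset_zero]
  have hsplitc : ∑ i ∈ Finset.Ico 0 (e+1), scol n m S i
      + ∑ i ∈ Finset.Ico (e+1) (n+1), scol n m S i
      = ∑ i ∈ Finset.Ico 0 (n+1), scol n m S i :=
    Finset.sum_Ico_consecutive _ (by omega) (by omega)
  have hstepc : ∑ i ∈ Finset.Ico e (n+1), scol n m S i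
      = scol n m S e + ∑ i ∈ Finset.Ico (e+1) (n+1), scol n m S i :=
    Finset.sum_eq_sum_Ico_succ_bot (by omega) _
  have hstepc0 : ∑ i ∈ Finset.Ico 0 (n+1), scol n m S i
      = scol n m S 0 + ∑ i ∈ Finset.Ico 1 (n+1), scol n m S i :=
    Finset.sum_eq_sum_Ico_succ_bot (by omega) _
  have hsplitb : ∑ k ∈ Finset.Ico 0 e, bcol n m S k
      + ∑ k ∈ Finset.Ico e (n+1), bcol n m S k
      = ∑ k ∈ Finset.Ico 0 (n+1), bcol n m S k :=
    Finset.sum_Ico_consecutive _ (by omega) (by omega)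
  have hstepb : ∑ k ∈ Finset.Ico e (n+1), bcol n m S k
      = bcol n m S e + ∑ k ∈ Finset.Ico (e+1) (n+1), bcol n m S k :=
    Finset.sum_eq_sum_Ico_succ_bot (by omega) _
  have hstepb0 : ∑ k ∈ Finset.Ico 0 (n+1), bcol n m S k
      = bcol n m S 0 + ∑ k ∈ Finset.Ico 1 (n+1), bcol n m S k :=
    Finset.sum_eq_sum_Ico_succ_bot (by omega) _
  have hSc : S.ncard = ∑ k ∈ Finset.Ico 1 (n+1), scol n m S k := card_colsum S
  have htri1 := tri_add_le (∑ k ∈ Finset.Ico 0 e, bcol n m S k)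
    (∑ k ∈ Finset.Ico (e+1) (n+1), bcol n m S k)
  have htri2 : tri (∑ k ∈ Finset.Ico 0 e, bcol n m S k
      + ∑ k ∈ Finset.Ico (e+1) (n+1), bcol n m S k) ≤ tri (m - 1) :=
    tri_mono (by omega)
  omega

end Cases
section Case2
variable {n m : ℕ} {S : Set (Fin n × Fin m)}

private lemma case2 (hm : 2 ≤ m) (hmn : m ≤ n)
    (hb : (boundary (gridGraph n m) S).ncard ≤ m - 1)
    (hfull : ∃ α, 1 ≤ α ∧ α ≤ n ∧ colset n m Sᶜ α = ∅) :
    (Sᶜ : Set (Fin n × Fin m)).ncard ≤ tri (m - 2) := by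
  obtain ⟨α, hα1, hα2, hα, hdisj⟩ := good_anchor hm hmn hb hfull
  have hBsum := bcol_sum (n := n) (m := m) (S := S)
  have hnoempty := no_empty_col hm hb hα1 hα2 hα
  have hXc : (Sᶜ : Set (Fin n × Fin m)).ncard = ∑ k ∈ Finset.Ico 1 (n+1), xcol n m S k :=
    card_colsum _
  have hxα : xcol n m S α = 0 := by simp [xcol, hα]
  have hmix : ∀ k, 0 < xcol n m S k → 1 ≤ bcol n m S k := by
    intro k hk
    obtain ⟨hk1, hk2⟩ := colset_real (Finset.card_pos.1 hk)
    exact bcol_pos (Finset.card_pos.2 (hnoempty k hk1 hk2)) hk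
  have hanch : xcol n m S (α-1) + xcol n m S (α+1) ≤ bcol n m S α := by
    have hu : colset n m Sᶜ (α-1) ∪ colset n m Sᶜ (α+1)
        ⊆ colset n m (boundary (gridGraph n m) S) α :=
      Finset.union_subset (full_witness_left hα1 hα2 hα) (full_witness_right hα1 hα2 hα)
    have hcard := Finset.card_le_card hu
    rw [Finset.card_union_of_disjoint (Finset.disjoint_iff_inter_eq_empty.2 hdisj)] at hcard
    simpa [xcol, bcol] using hcard
  set Mix := (Finset.Ico 1 (n+1)).filter (fun k => 0 < xcol n m S k) with hMix
  by_cases hM : Mix = ∅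
  · have hz : ∀ k ∈ Finset.Ico 1 (n+1), xcol n m S k = 0 := by
      intro k hk
      by_contra h
      have : k ∈ Mix := by
        rw [hMix]
        exact Finset.mem_filter.2 ⟨hk, Nat.pos_of_ne_zero h⟩
      simp [hM] at this
    rw [hXc, Finset.sum_eq_zero hz]
    exact Nat.zero_le _
  · have hMne : Mix.Nonempty := Finset.nonempty_iff_ne_empty.2 hM
    set l := Mix.min' hMne with hldef
    set e := Mix.max' hMne with hedef
    have hlM0 : l ∈ Mix := Mix.min'_mem hMne
    have heM0 : e ∈ Mix := Mix.max'_mem hMne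
    have hle : l ≤ e := Finset.min'_le Mix _ heM0
    have hmem : ∀ k, k ∈ Mix → (1 ≤ k ∧ k ≤ n) ∧ 0 < xcol n m S k := by
      intro k hk
      rw [hMix, Finset.mem_filter, Finset.mem_Ico] at hk
      exact ⟨⟨hk.1.1, by omega⟩, hk.2⟩
    have hl1 : 1 ≤ l := (hmem l hlM0).1.1
    have hln : l ≤ n := (hmem l hlM0).1.2
    have he1 : 1 ≤ e := (hmem e heM0).1.1
    have hen : e ≤ n := (hmem e heM0).1.2
    have hxl : 0 < xcol n m S l := (hmem l hlM0).2
    have hxe : 0 < xcol n m S e := (hmem e heM0).2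
    have hbl : 1 ≤ bcol n m S l := hmix l hxl
    have hbe : 1 ≤ bcol n m S e := hmix e hxe
    have hout : ∀ k, 0 < xcol n m S k → l ≤ k ∧ k ≤ e := by
      intro k hk
      obtain ⟨hk1, hk2⟩ := colset_real (Finset.card_pos.1 hk)
      have hkM : k ∈ Mix := by
        rw [hMix]
        exact Finset.mem_filter.2 ⟨Finset.mem_Ico.2 ⟨hk1, by omega⟩, hk⟩
      exact ⟨Finset.min'_le Mix k hkM, Finset.le_max' Mix k hkM⟩
    have hXtot : ∑ k ∈ Finset.Ico 1 (n+1), xcol n m S k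
        = ∑ k ∈ Finset.Ico l (e+1), xcol n m S k := by
      symm
      apply Finset.sum_subset (Finset.Ico_subset_Ico hl1 (by omega))
      intro k _ hknot
      by_contra h
      have := hout k (Nat.pos_of_ne_zero h)
      exact hknot (Finset.mem_Ico.2 ⟨this.1, by omega⟩)
    have hαl : α ≠ l := fun h => by rw [h] at hxα; omega
    have hαe : α ≠ e := fun h => by rw [h] at hxα; omega
    by_cases hL : l < α
    · -- there are mixed columns to the left of α ; build the left pass
      set w : ℕ → ℕ := fun r => if r = α - 1 then xcol n m S (α-1) else bcol n m S (r+1)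
        with hwdef
      have hleft : ∑ i ∈ Finset.Ico l (α+1), xcol n m S i
          ≤ tri (∑ k ∈ Finset.Ico l α, w k) := by
        apply passDown (xcol n m S) w l α (by omega) hxα
        · intro r hr hrα
          by_cases hr1 : r = α - 1
          · subst hr1
            simp only [hwdef]
            simp only [if_true]
            rw [show α - 1 + 1 = α from by omega]
            omega
          · simp only [hwdef]
            rw [if_neg hr1]
            exact xcol_chain_left (by omega)
        · intro r hr hrα hpos
          by_cases hr1 : r = α - 1
          · subst hr1
            simp only [hwdef]
            simp only [if_true]
            omega
          · simp only [hwdef]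
            rw [if_neg hr1]
            by_cases hx1 : 0 < xcol n m S (r+1)
            · exact hmix _ hx1
            · have := xcol_chain_left (S := S) (show r + 1 ≤ n by omega)
              omega
      have hWLeq : ∑ k ∈ Finset.Ico l α, w k
          = ∑ k ∈ Finset.Ico (l+1) α, bcol n m S k + xcol n m S (α-1) := by
        have h1 : ∑ k ∈ Finset.Ico l ((α-1)+1), w k
            = ∑ k ∈ Finset.Ico l (α-1), w k + w (α-1) :=
          Finset.sum_Ico_succ_top (by omega) w
        rw [show (α-1)+1 = α from by omega] at h1
        have h2 : ∑ k ∈ Finset.Ico l (α-1), w k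
            = ∑ k ∈ Finset.Ico l (α-1), bcol n m S (k+1) := by
          apply Finset.sum_congr rfl
          intro k hk
          rw [Finset.mem_Ico] at hk
          simp only [hwdef]
          rw [if_neg (show k ≠ α - 1 by omega)]
        have h3 : ∑ k ∈ Finset.Ico l (α-1), bcol n m S (k+1)
            = ∑ k ∈ Finset.Ico (l+1) ((α-1)+1), bcol n m S k := sum_shift _ _ _
        rw [show (α-1)+1 = α from by omega] at h3
        have h4 : w (α-1) = xcol n m S (α-1) := by simp only [hwdef]; simp
        rw [h1, h2, h3, h4]
      by_cases hR : α < e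
      · -- both sides
        set w' : ℕ → ℕ := fun r => if r = α then xcol n m S (α+1) else bcol n m S r
          with hw'def
        have hright : ∑ i ∈ Finset.Ico α (e+1), xcol n m S i
            ≤ tri (∑ k ∈ Finset.Ico α e, w' k) := by
          apply passUp (xcol n m S) w' α e (by omega) hxα
          · intro r hrα hre
            by_cases hr1 : r = α
            · subst hr1
              simp only [hw'def]
              simp only [if_true]
              omega
            · simp only [hw'def]
              rw [if_neg hr1]
              exact xcol_chain_right (by omega)
          · intro r hrα hre hpos
            by_cases hr1 : r = α
            · subst hr1
              simp only [hw'def]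
              simp only [if_true]
              omega
            · simp only [hw'def]
              rw [if_neg hr1]
              by_cases hx1 : 0 < xcol n m S r
              · exact hmix _ hx1
              · have := xcol_chain_right (S := S) (show 1 ≤ r by omega)
                omega
        have hWReq : ∑ k ∈ Finset.Ico α e, w' k
            = xcol n m S (α+1) + ∑ k ∈ Finset.Ico (α+1) e, bcol n m S k := by
          have h1 : ∑ k ∈ Finset.Ico α e, w' k = w' α + ∑ k ∈ Finset.Ico (α+1) e, w' k :=
            Finset.sum_eq_sum_Ico_succ_bot (by omega) w'
          have h2 : ∑ k ∈ Finset.Ico (α+1) e, w' k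
              = ∑ k ∈ Finset.Ico (α+1) e, bcol n m S k := by
            apply Finset.sum_congr rfl
            intro k hk
            rw [Finset.mem_Ico] at hk
            simp only [hw'def]
            rw [if_neg (show k ≠ α by omega)]
          have h3 : w' α = xcol n m S (α+1) := by simp only [hw'def]; simp
          rw [h1, h2, h3]
        -- boundary bookkeeping
        have hB1 : ∑ k ∈ Finset.Ico l (e+1), bcol n m S k
            ≤ ∑ k ∈ Finset.Ico 1 (n+1), bcol n m S k :=
          Finset.sum_le_sum_of_subset (Finset.Ico_subset_Ico hl1 (by omega))
        have hB2 : ∑ k ∈ Finset.Ico l (e+1), bcol n m S k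
            = bcol n m S l + ∑ k ∈ Finset.Ico (l+1) (e+1), bcol n m S k :=
          Finset.sum_eq_sum_Ico_succ_bot (by omega) _
        have hB3 : ∑ k ∈ Finset.Ico (l+1) (α+1), bcol n m S k
            + ∑ k ∈ Finset.Ico (α+1) (e+1), bcol n m S k
            = ∑ k ∈ Finset.Ico (l+1) (e+1), bcol n m S k :=
          Finset.sum_Ico_consecutive _ (by omega) (by omega)
        have hB4 : ∑ k ∈ Finset.Ico (l+1) (α+1), bcol n m S k
            = ∑ k ∈ Finset.Ico (l+1) α, bcol n m S k + bcol n m S α :=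
          Finset.sum_Ico_succ_top (by omega) _
        have hB5 : ∑ k ∈ Finset.Ico (α+1) (e+1), bcol n m S k
            = ∑ k ∈ Finset.Ico (α+1) e, bcol n m S k + bcol n m S e :=
          Finset.sum_Ico_succ_top (by omega) _
        have hWW : (∑ k ∈ Finset.Ico l α, w k) + (∑ k ∈ Finset.Ico α e, w' k) ≤ m - 2 := by
          rw [hWLeq, hWReq]
          omega
        have htfin := le_trans
          (tri_add_le (∑ k ∈ Finset.Ico l α, w k) (∑ k ∈ Finset.Ico α e, w' k))
          (tri_mono hWW)
        have hsplitX : ∑ i ∈ Finset.Ico l (α+1), xcol n m S i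
            + ∑ i ∈ Finset.Ico (α+1) (e+1), xcol n m S i
            = ∑ i ∈ Finset.Ico l (e+1), xcol n m S i :=
          Finset.sum_Ico_consecutive _ (by omega) (by omega)
        have hstepX : ∑ i ∈ Finset.Ico α (e+1), xcol n m S i
            = xcol n m S α + ∑ i ∈ Finset.Ico (α+1) (e+1), xcol n m S i :=
          Finset.sum_eq_sum_Ico_succ_bot (by omega) _
        omega
      · -- only left side
        have heα : e < α := by omega
        have hsub : ∑ k ∈ Finset.Ico l (e+1), xcol n m S k
            ≤ ∑ k ∈ Finset.Ico l (α+1), xcol n m S k :=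
          Finset.sum_le_sum_of_subset (Finset.Ico_subset_Ico le_rfl (by omega))
        have hB1 : ∑ k ∈ Finset.Ico l (α+1), bcol n m S k
            ≤ ∑ k ∈ Finset.Ico 1 (n+1), bcol n m S k :=
          Finset.sum_le_sum_of_subset (Finset.Ico_subset_Ico hl1 (by omega))
        have hB2 : ∑ k ∈ Finset.Ico l (α+1), bcol n m S k
            = bcol n m S l + ∑ k ∈ Finset.Ico (l+1) (α+1), bcol n m S k :=
          Finset.sum_eq_sum_Ico_succ_bot (by omega) _
        have hB4 : ∑ k ∈ Finset.Ico (l+1) (α+1), bcol n m S k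
            = ∑ k ∈ Finset.Ico (l+1) α, bcol n m S k + bcol n m S α :=
          Finset.sum_Ico_succ_top (by omega) _
        have hWW : (∑ k ∈ Finset.Ico l α, w k) ≤ m - 2 := by
          rw [hWLeq]
          omega
        have htfin := tri_mono hWW
        omega
    · -- only right side
      have hαl' : α < l := by omega
      set w' : ℕ → ℕ := fun r => if r = α then xcol n m S (α+1) else bcol n m S r
        with hw'def
      have hright : ∑ i ∈ Finset.Ico α (e+1), xcol n m S i
          ≤ tri (∑ k ∈ Finset.Ico α e, w' k) := by
        apply passUp (xcol n m S) w' α e (by omega) hxα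
        · intro r hrα hre
          by_cases hr1 : r = α
          · subst hr1
            simp only [hw'def]
            simp only [if_true]
            omega
          · simp only [hw'def]
            rw [if_neg hr1]
            exact xcol_chain_right (by omega)
        · intro r hrα hre hpos
          by_cases hr1 : r = α
          · subst hr1
            simp only [hw'def]
            simp only [if_true]
            omega
          · simp only [hw'def]
            rw [if_neg hr1]
            by_cases hx1 : 0 < xcol n m S r
            · exact hmix _ hx1
            · have := xcol_chain_right (S := S) (show 1 ≤ r by omega)
              omega
      have hWReq : ∑ k ∈ Finset.Ico α e, w' k
          = xcol n m S (α+1) + ∑ k ∈ Finset.Ico (α+1) e, bcol n m S k := by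
        have h1 : ∑ k ∈ Finset.Ico α e, w' k = w' α + ∑ k ∈ Finset.Ico (α+1) e, w' k :=
          Finset.sum_eq_sum_Ico_succ_bot (by omega) w'
        have h2 : ∑ k ∈ Finset.Ico (α+1) e, w' k
            = ∑ k ∈ Finset.Ico (α+1) e, bcol n m S k := by
          apply Finset.sum_congr rfl
          intro k hk
          rw [Finset.mem_Ico] at hk
          simp only [hw'def]
          rw [if_neg (show k ≠ α by omega)]
        have h3 : w' α = xcol n m S (α+1) := by simp only [hw'def]; simp
        rw [h1, h2, h3]
      have hsub : ∑ k ∈ Finset.Ico l (e+1), xcol n m S k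
          ≤ ∑ k ∈ Finset.Ico α (e+1), xcol n m S k :=
        Finset.sum_le_sum_of_subset (Finset.Ico_subset_Ico (by omega) le_rfl)
      have hB1 : ∑ k ∈ Finset.Ico α (e+1), bcol n m S k
          ≤ ∑ k ∈ Finset.Ico 1 (n+1), bcol n m S k :=
        Finset.sum_le_sum_of_subset (Finset.Ico_subset_Ico (by omega) (by omega))
      have hB2 : ∑ k ∈ Finset.Ico α (e+1), bcol n m S k
          = bcol n m S α + ∑ k ∈ Finset.Ico (α+1) (e+1), bcol n m S k :=
        Finset.sum_eq_sum_Ico_succ_bot (by omega) _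
      have hB5 : ∑ k ∈ Finset.Ico (α+1) (e+1), bcol n m S k
          = ∑ k ∈ Finset.Ico (α+1) e, bcol n m S k + bcol n m S e :=
        Finset.sum_Ico_succ_top (by omega) _
      have hWW : (∑ k ∈ Finset.Ico α e, w' k) ≤ m - 2 := by
        rw [hWReq]
        omega
      have htfin := tri_mono hWW
      omega

end Case2

/-- For `n ≥ m ≥ 2`, every set `S` of vertices of the `n × m` grid graph with
`|∂(S)| ≤ m − 1` satisfies `|S| ≤ m(m−1)/2` or `|S| ≥ mn − (m−2)(m−1)/2`. -/
theorem gridGraph_small_boundary (n m : ℕ) (hm : 2 ≤ m) (hnm : m ≤ n)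
    (S : Set (Fin n × Fin m)) (hb : (boundary (gridGraph n m) S).ncard ≤ m - 1) :
    S.ncard ≤ m * (m - 1) / 2 ∨ m * n - (m - 2) * (m - 1) / 2 ≤ S.ncard := by
  by_cases hfull : ∃ α, 1 ≤ α ∧ α ≤ n ∧ colset n m Sᶜ α = ∅
  · right
    have h2 := case2 hm hnm hb hfull
    have hcompl : S.ncard + (Sᶜ : Set (Fin n × Fin m)).ncard = n * m := by
      have h := Set.ncard_add_ncard_compl S
      simpa using h
    have key : (m-2) * (m-1) / 2 = tri (m-2) := by
      have h1 := tri_two (m-2)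
      have h2' : (m-2) * (m-2+1) = (m-2) * (m-1) := by
        rw [show m-2+1 = m-1 from by omega]
      rw [← h2', ← h1]
      exact Nat.mul_div_cancel_left _ (by norm_num)
    rw [key, Nat.mul_comm m n]
    omega
  · left
    push_neg at hfull
    have h1 := case1 hm hnm hb (fun k hk1 hk2 =>
      hfull k hk1 hk2)
    have key : m * (m-1) / 2 = tri (m-1) := by
      have h1' := tri_two (m-1)
      have h2' : (m-1) * (m-1+1) = m * (m-1) := by
        rw [show m-1+1 = m from by omega]
        ring
      rw [← h2', ← h1']
      exact Nat.mul_div_cancel_left _ (by norm_num)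
    rw [key]
    exact h1

end Inspection
end

section
/- For every finite simple graph G, the topological inspection number satisfies in_t(G) ≤ |V(G)| + 2. -/
open SimpleGraph


namespace Inspection

variable {V : Type*} {W : Type*}

/- ========= Auxiliary development for the main theorem ========= -/

lemma boundary_univ' (G : SimpleGraph V) : boundary G (Set.univ : Set V) = ∅ := by
  ext x; simp [boundary]

def PairOk (H : SimpleGraph W) (k : ℕ) (P Q : Set W) : Prop :=
  P ⊆ Q ∧ (Q \ (P \ boundary H P)).ncard ≤ k

def lastD {α : Type*} (a : α) : List α → α
  | [] => a
  | b :: l => lastD b l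

lemma lastD_append {α : Type*} (a x : α) : ∀ (l : List α), lastD a (l ++ [x]) = x
  | [] => rfl
  | _ :: l => lastD_append _ x l

lemma lastD_append' {α : Type*} (a : α) : ∀ (l₁ l₂ : List α),
    lastD a (l₁ ++ l₂) = lastD (lastD a l₁) l₂
  | [], _ => rfl
  | b :: l₁, l₂ => lastD_append' b l₁ l₂

lemma chain_append' {α : Type*} {R : α → α → Prop} : ∀ {l₁ l₂ : List α} {a : α},
    List.Chain R a l₁ → List.Chain R (lastD a l₁) l₂ → List.Chain R a (l₁ ++ l₂)
  | [], _, _, _, h₂ => h₂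
  | b :: l₁, l₂, a, h₁, h₂ => by
      rw [List.cons_append]
      rcases List.chain_cons.mp h₁ with ⟨hab, h₁'⟩
      exact List.chain_cons.mpr ⟨hab, chain_append' h₁' h₂⟩

lemma getD_length_eq_lastD {α : Type*} (d : α) : ∀ (l : List α) (a : α),
    (a :: l).getD l.length d = lastD a l
  | [], _ => rfl
  | b :: l, _ => getD_length_eq_lastD d l b

lemma chain_getD {α : Type*} {R : α → α → Prop} (d : α) :
    ∀ (l : List α) (a : α), List.Chain R a l → ∀ t, t < l.length →
      R ((a :: l).getD t d) ((a :: l).getD (t + 1) d)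
  | [], _, _, t, ht => absurd ht (by simp)
  | b :: l, a, hc, 0, _ => by
      simpa using (List.chain_cons.mp hc).1
  | b :: l, a, hc, t + 1, ht => by
      have := chain_getD d l b (List.chain_cons.mp hc).2 t (by simpa using ht)
      simpa using this

lemma success_of_chain (H : SimpleGraph W) (k : ℕ) (Ds : List (Set W))
    (hc : List.Chain (PairOk H k) ∅ Ds) (hl : lastD ∅ Ds = Set.univ) :
    SuccessfulSearch H k := by
  classical
  set ℓ := Ds.length with hℓ
  set Df : ℕ → Set W := fun t => (∅ :: Ds).getD t Set.univ with hDf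
  have hD0 : Df 0 = ∅ := rfl
  have hDl : ∀ t, ℓ ≤ t → Df t = Set.univ := by
    intro t ht
    rcases eq_or_lt_of_le ht with h | h
    · show (∅ :: Ds).getD t Set.univ = Set.univ
      rw [← h, getD_length_eq_lastD, hl]
    · exact List.getD_eq_default _ _ (by simpa using h)
  have hpair : ∀ t, PairOk H k (Df t) (Df (t + 1)) := by
    intro t
    by_cases ht : t < ℓ
    · exact chain_getD _ Ds ∅ hc t ht
    · have h1 : Df t = Set.univ := hDl t (le_of_not_gt ht)
      have h2 : Df (t + 1) = Set.univ := hDl _ (by omega)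
      rw [h1, h2]
      exact ⟨subset_rfl, by simp [boundary_univ']⟩
  set S : ℕ → Set W := fun t => Df t \ (Df (t - 1) \ boundary H (Df (t - 1))) with hS
  have hFC : ∀ t, FC H S t = Df t \ boundary H (Df t) := by
    intro t; induction t with
    | zero => rw [hD0]; simp [FC]
    | succ t ih =>
      have hsub : Df t \ boundary H (Df t) ⊆ Df (t + 1) :=
        Set.Subset.trans Set.diff_subset (hpair t).1
      have hun : FC H S t ∪ S (t + 1) = Df (t + 1) := by
        rw [ih, hS]
        simp only [Nat.add_sub_cancel]
        exact Set.union_diff_cancel hsub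
      show (FC H S t ∪ S (t + 1)) \ boundary H (FC H S t ∪ S (t + 1)) = _
      rw [hun]
  refine ⟨ℓ, S, ?_, ?_⟩
  · intro t h1t _
    have hp := (hpair (t - 1)).2
    have ht1 : t - 1 + 1 = t := Nat.succ_pred_eq_of_pos h1t
    rw [ht1] at hp
    exact hp
  · rw [hFC ℓ, hDl ℓ le_rfl, boundary_univ']; simp

def sweepDs (H : SimpleGraph W) : Set W → ∀ {a b : W}, H.Walk a b → List (Set W)
  | _, _, _, .nil => []
  | _, _, _, .cons _ .nil => []
  | B, _, _, .cons (v := c) _ (.cons (v := d) h' q) =>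
      (B ∪ {c, d}) :: sweepDs H (B ∪ {c}) (Walk.cons h' q)

def sweepAcc (H : SimpleGraph W) : Set W → ∀ {a b : W}, H.Walk a b → Set W
  | B, _, _, .nil => B
  | B, _, _, .cons (v := c) _ q => sweepAcc H (B ∪ {c}) q

lemma ncard_le_of_subset_union_two {A C : Set W} {x y : W} {n : ℕ} (hA : A ⊆ C ∪ {x, y})
    (hC : C.Finite) (hCn : C.ncard ≤ n) : A.ncard ≤ n + 2 := by
  have h1 : A.ncard ≤ (C ∪ {x, y}).ncard :=
    Set.ncard_le_ncard hA (hC.union ((Set.finite_singleton y).insert x))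
  have h2 : (C ∪ ({x, y} : Set W)).ncard ≤ C.ncard + ({x, y} : Set W).ncard :=
    Set.ncard_union_le _ _
  have h3 : ({x, y} : Set W).ncard ≤ 2 :=
    le_trans (Set.ncard_insert_le _ _) (by simp)
  omega

lemma path_local {H : SimpleGraph W} {a c d b : W} (h : H.Adj a c) (h' : H.Adj c d)
    (q : H.Walk d b) (hp : (Walk.cons h (Walk.cons h' q)).IsPath) {y : W}
    (he : s(c, y) ∈ (Walk.cons h (Walk.cons h' q)).edges) : y = a ∨ y = d := by
  rw [Walk.edges_cons, Walk.edges_cons, List.mem_cons, List.mem_cons] at he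
  rcases he with he | he | he
  · rcases Sym2.eq_iff.mp he with ⟨hca, _⟩ | ⟨_, hya⟩
    · exact absurd hca.symm h.ne
    · exact Or.inl hya
  · rcases Sym2.eq_iff.mp he with ⟨_, hyd⟩ | ⟨hcd, _⟩
    · exact Or.inr hyd
    · exact absurd hcd h'.ne
  · have hc : c ∈ q.support := Walk.fst_mem_support_of_mem_edges q he
    have hp' : (Walk.cons h' q).IsPath := ((Walk.cons_isPath_iff h _).mp hp).1
    exact absurd hc ((Walk.cons_isPath_iff h' q).mp hp').2


lemma sweep_spec {H : SimpleGraph W} (F : Set W) (n : ℕ) (hFfin : F.Finite)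
    (hFn : F.ncard ≤ n) :
    ∀ {c b : W} (t : H.Walk c b) {a : W} (h : H.Adj a c) (B P : Set W),
    (Walk.cons h t).IsPath →
    B.Finite → a ∈ B → b ∈ F → F ⊆ B →
    (∀ x ∈ (Walk.cons h t).support, x ∉ F → ∀ y, H.Adj x y →
        s(x, y) ∈ (Walk.cons h t).edges ∨ y ∈ B) →
    (∀ x ∈ (Walk.cons h t).support.tail, x ∈ F → x = b) →
    (∀ z ∈ B, z ∉ F → ∀ y, H.Adj z y → y ∈ B ∪ {c}) →
    P ⊆ B ∪ {c} →
    ((B \ (P \ boundary H P)).ncard ≤ n ∨ P = B ∪ {c}) →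
    List.Chain (PairOk H (n + 2)) P (sweepDs H B (Walk.cons h t)) ∧
    F ⊆ sweepAcc H B (Walk.cons h t) ∧
    B ⊆ sweepAcc H B (Walk.cons h t) ∧
    (∀ x ∈ (Walk.cons h t).support, x ∈ sweepAcc H B (Walk.cons h t)) ∧
    (sweepAcc H B (Walk.cons h t)).Finite ∧
    (∀ z ∈ sweepAcc H B (Walk.cons h t), z ∉ F → ∀ y, H.Adj z y →
        y ∈ sweepAcc H B (Walk.cons h t)) ∧
    lastD P (sweepDs H B (Walk.cons h t)) ⊆ sweepAcc H B (Walk.cons h t) ∧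
    (sweepAcc H B (Walk.cons h t) \
      (lastD P (sweepDs H B (Walk.cons h t)) \
        boundary H (lastD P (sweepDs H B (Walk.cons h t))))).ncard ≤ n := by
  intro c b t
  induction t with
  | @nil c =>
    intro a h B P hp hBfin haB hbF hFB _ _ hCl hP1 hP2
    have hacc : sweepAcc H B (Walk.cons h Walk.nil) = B ∪ {c} := rfl
    have hds : sweepDs H B (Walk.cons h Walk.nil) = [] := rfl
    have hcB : (c : W) ∈ B := hFB hbF
    have hBc : B ∪ {c} = B := by
      rw [Set.union_eq_left]; simpa using hcB
    rw [hds, hacc, hBc]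
    refine ⟨List.Chain.nil, hFB, subset_rfl, ?_, hBfin, ?_, ?_, ?_⟩
    · intro x hx
      simp only [Walk.support_cons, Walk.support_nil, List.mem_cons,
        List.mem_singleton] at hx
      rcases hx with rfl | rfl | h'
      exacts [haB, hcB, absurd h' (by simp)]
    · intro z hz hzF y hy
      have := hCl z hz hzF y hy
      rwa [hBc] at this
    · show P ⊆ B
      rw [← hBc]; exact hP1
    · show (B \ (P \ boundary H P)).ncard ≤ n
      rcases hP2 with hn | hPeq
      · exact hn
      · have hPB : P = B := hPeq.trans hBc
        subst hPB
        have hbd : boundary H P ⊆ F := by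
          intro z hz
          by_contra hzF
          obtain ⟨hzB, w', hw'B, hw'⟩ := hz
          have := hCl z hzB hzF w' hw'
          rw [hBc] at this
          exact hw'B this
        have hsub : P \ (P \ boundary H P) ⊆ F := by
          rw [Set.diff_diff_right_self]
          exact Set.inter_subset_right.trans hbd
        exact le_trans (Set.ncard_le_ncard hsub hFfin) hFn
  | @cons u v w h'' q ih =>
    intro a h B P hp hBfin haB hbF hFB hH1 hHF hCl hP1 hP2
    have hds : sweepDs H B (Walk.cons h (Walk.cons h'' q)) =
        (B ∪ {u, v}) :: sweepDs H (B ∪ {u}) (Walk.cons h'' q) := rfl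
    have hacc : sweepAcc H B (Walk.cons h (Walk.cons h'' q)) =
        sweepAcc H (B ∪ {u}) (Walk.cons h'' q) := rfl
    have hp' : (Walk.cons h'' q).IsPath := ((Walk.cons_isPath_iff h _).mp hp).1
    have haNot : a ∉ (Walk.cons h'' q).support := ((Walk.cons_isPath_iff h _).mp hp).2
    have huw : u ≠ w := by
      have hu : u ∉ q.support := ((Walk.cons_isPath_iff h'' q).mp hp').2
      intro he; exact hu (he ▸ q.end_mem_support)
    have huF : u ∉ F := by
      intro huF
      exact huw (hHF u (by simp [Walk.support_cons]) huF)
    have hnbru : ∀ y, H.Adj u y → y ∈ B ∪ {v} := by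
      intro y hy
      rcases hH1 u (by simp [Walk.support_cons]) huF y hy with he | hyB
      · rcases path_local h h'' q hp he with rfl | rfl
        · exact Set.mem_union_left _ haB
        · exact Set.mem_union_right _ rfl
      · exact Set.mem_union_left _ hyB
    have hEeq : B ∪ {u, v} = (B ∪ {u}) ∪ {v} := by
      ext x
      simp only [Set.mem_union, Set.mem_insert_iff, Set.mem_singleton_iff]
      tauto
    have hH1' : ∀ x ∈ (Walk.cons h'' q).support, x ∉ F → ∀ y, H.Adj x y →
        s(x, y) ∈ (Walk.cons h'' q).edges ∨ y ∈ B ∪ {u} := by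
      intro x hx hxF y hy
      rcases hH1 x (by rw [Walk.support_cons]; exact List.mem_cons_of_mem _ hx) hxF y hy with
        he | hyB
      · rw [Walk.edges_cons, List.mem_cons] at he
        rcases he with he | he
        · rcases Sym2.eq_iff.mp he with ⟨hxa, _⟩ | ⟨_, hya⟩
          · exact absurd (hxa ▸ hx) haNot
          · exact Or.inr (Set.mem_union_left _ (hya ▸ haB))
        · exact Or.inl he
      · exact Or.inr (Set.mem_union_left _ hyB)
    have hHF' : ∀ x ∈ (Walk.cons h'' q).support.tail, x ∈ F → x = w := by
      intro x hx hxF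
      exact hHF x (by rw [Walk.support_cons]; exact List.mem_of_mem_tail hx) hxF
    have hCl' : ∀ z ∈ B ∪ {u}, z ∉ F → ∀ y, H.Adj z y → y ∈ (B ∪ {u}) ∪ {v} := by
      intro z hz hzF y hy
      rcases hz with hzB | hzu
      · exact Set.mem_union_left _ (by
          have := hCl z hzB hzF y hy
          exact Set.union_subset_union_right B (by simp) this)
      · rcases hnbru y ((Set.eq_of_mem_singleton hzu) ▸ hy) with hyB | hyv
        · exact Set.mem_union_left _ (Set.mem_union_left _ hyB)
        · exact Set.mem_union_right _ hyv
    obtain ⟨ihChain, ihF, ihB, ihSupp, ihFin, ihCl, ihLast, ihCard⟩ :=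
      ih (h := h'') (B := B ∪ {u}) (P := B ∪ {u, v}) hp'
        (hBfin.union (Set.finite_singleton u))
        (Set.mem_union_right _ rfl) hbF (hFB.trans Set.subset_union_left)
        hH1' hHF' hCl' (le_of_eq hEeq) (Or.inr hEeq)
    have hPE : PairOk H (n + 2) P (B ∪ {u, v}) := by
      constructor
      · exact hP1.trans (by rw [hEeq]; exact Set.subset_union_left)
      · rcases hP2 with hn | hPeq
        · have hsub : (B ∪ {u, v}) \ (P \ boundary H P) ⊆
              (B \ (P \ boundary H P)) ∪ {u, v} := by
            intro x hx
            obtain ⟨hxE, hxP⟩ := hx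
            rcases hxE with hxB | hxuv
            · exact Set.mem_union_left _ ⟨hxB, hxP⟩
            · exact Set.mem_union_right _ hxuv
          exact ncard_le_of_subset_union_two hsub (hBfin.subset Set.diff_subset) hn
        · have hbd : boundary H P ⊆ F ∪ {u} := by
            intro z hz
            obtain ⟨hzP, w', hw'P, hw'⟩ := hz
            by_contra hzc
            simp only [Set.mem_union, Set.mem_singleton_iff, not_or] at hzc
            have hzB : z ∈ B := by
              rw [hPeq] at hzP
              rcases hzP with hzB | hzu
              · exact hzB
              · exact absurd (Set.eq_of_mem_singleton hzu) hzc.2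
            have := hCl z hzB hzc.1 w' hw'
            rw [← hPeq] at this
            exact hw'P this
          have hsub : (B ∪ {u, v}) \ (P \ boundary H P) ⊆ F ∪ {u, v} := by
            intro x hx
            obtain ⟨hxE, hxP⟩ := hx
            rcases hxE with hxB | hxuv
            · have hxPm : x ∈ P := by rw [hPeq]; exact Set.mem_union_left _ hxB
              have hxbd : x ∈ boundary H P := by
                by_contra hc
                exact hxP ⟨hxPm, hc⟩
              rcases hbd hxbd with hxF | hxu
              · exact Set.mem_union_left _ hxF
              · exact Set.mem_union_right _ (Set.mem_insert_iff.mpr (Or.inl hxu))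
            · exact Set.mem_union_right _ hxuv
          exact ncard_le_of_subset_union_two hsub hFfin hFn
    rw [hds, hacc]
    refine ⟨List.chain_cons.mpr ⟨hPE, ihChain⟩, ihF,
      Set.subset_union_left.trans ihB, ?_, ihFin, ihCl, ?_, ?_⟩
    · intro x hx
      rw [Walk.support_cons, List.mem_cons] at hx
      rcases hx with rfl | hx
      · exact ihB (Set.mem_union_left _ haB)
      · exact ihSupp x hx
    · show lastD (B ∪ {u, v}) (sweepDs H (B ∪ {u}) (Walk.cons h'' q)) ⊆ _
      exact ihLast
    · exact ihCard

-- identity subdivision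
def idSubdivision (H : SimpleGraph W) : SubdivisionData H H where
  f := id
  inj := fun _ _ h => h
  walk := fun h => Walk.cons h Walk.nil
  isPath := fun h => by simp [Walk.cons_isPath_iff, h.ne]
  symm := fun h => by simp
  disj := fun _ _ _ w _ _ => ⟨w, rfl⟩
  branch := fun h w hw _ => by simpa using hw
  cover_vert := fun w => Or.inl ⟨w, rfl⟩
  cover_edge := fun e he => by
    induction e with
    | _ u v => exact ⟨u, v, he, by exact List.mem_cons.mpr (Or.inl rfl)⟩

-- interior edge lemma
lemma interior_edges {G : SimpleGraph V} {H : SimpleGraph W} (D : SubdivisionData G H)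
    {u v : V} (h : G.Adj u v) {x y : W} (hx : x ∈ (D.walk h).support)
    (hxF : x ∉ Set.range D.f) (hadj : H.Adj x y) : s(x, y) ∈ (D.walk h).edges := by
  obtain ⟨u', v', h', hm⟩ := D.cover_edge s(x, y) hadj
  by_cases hsym : s(u, v) = s(u', v')
  · rcases Sym2.eq_iff.mp hsym with ⟨hu, hv⟩ | ⟨hu, hv⟩
    · subst hu; subst hv; exact hm
    · subst hu; subst hv
      have hrev : D.walk h' = (D.walk h'.symm).reverse := by
        rw [D.symm h'.symm]
      rw [hrev, Walk.edges_reverse, List.mem_reverse] at hm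
      exact hm
  · have hx' : x ∈ (D.walk h').support := Walk.fst_mem_support_of_mem_edges _ hm
    exact absurd (D.disj h h' hsym x hx hx') hxF

lemma tail_not_start {G : SimpleGraph V} {H : SimpleGraph W} (D : SubdivisionData G H)
    {u v : V} (h : G.Adj u v) {x : W} (hx : x ∈ (D.walk h).support.tail)
    (hxF : x ∈ Set.range D.f) : x = D.f v := by
  rcases D.branch h x (List.mem_of_mem_tail hx) hxF with hxu | hxv
  · exfalso
    have hnd := (D.isPath h).support_nodup
    rw [Walk.support_eq_cons] at hnd
    exact (List.nodup_cons.mp hnd).1 (hxu ▸ hx)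
  · exact hxv


open Classical in
noncomputable def build {G : SimpleGraph V} {H : SimpleGraph W} (D : SubdivisionData G H) :
    List (V × V) → Set W → List (Set W) × Set W
  | [], B => ([], B)
  | (u, v) :: rest, B =>
      if h : G.Adj u v then
        ((sweepDs H B (D.walk h)) ++ (build D rest (sweepAcc H B (D.walk h))).1,
          (build D rest (sweepAcc H B (D.walk h))).2)
      else build D rest B

lemma build_spec {G : SimpleGraph V} {H : SimpleGraph W} (D : SubdivisionData G H)
    (n : ℕ) (hFfin : (Set.range D.f).Finite) (hFn : (Set.range D.f).ncard ≤ n) :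
    ∀ (L : List (V × V)) (B P : Set W),
    B.Finite → Set.range D.f ⊆ B →
    (∀ z ∈ B, z ∉ Set.range D.f → ∀ y, H.Adj z y → y ∈ B) →
    P ⊆ B → (B \ (P \ boundary H P)).ncard ≤ n →
    List.Chain (PairOk H (n + 2)) P (build D L B).1 ∧
    ((build D L B).2).Finite ∧
    Set.range D.f ⊆ (build D L B).2 ∧
    (∀ z ∈ (build D L B).2, z ∉ Set.range D.f → ∀ y, H.Adj z y → y ∈ (build D L B).2) ∧
    lastD P (build D L B).1 ⊆ (build D L B).2 ∧
    ((build D L B).2 \ (lastD P (build D L B).1 \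
      boundary H (lastD P (build D L B).1))).ncard ≤ n ∧
    B ⊆ (build D L B).2 ∧
    (∀ p ∈ L, ∀ (h : G.Adj p.1 p.2), ∀ x ∈ (D.walk h).support, x ∈ (build D L B).2) := by
  intro L
  induction L with
  | nil =>
    intro B P hBfin hFB hCl hP1 hP2
    exact ⟨List.Chain.nil, hBfin, hFB, hCl, hP1, hP2, subset_rfl, by simp⟩
  | cons p rest ih =>
    intro B P hBfin hFB hCl hP1 hP2
    obtain ⟨u, v⟩ := p
    by_cases h : G.Adj u v
    · have hbuild : build D ((u, v) :: rest) B =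
          ((sweepDs H B (D.walk h)) ++ (build D rest (sweepAcc H B (D.walk h))).1,
            (build D rest (sweepAcc H B (D.walk h))).2) := by
        rw [build, dif_pos h]
      have hfune : D.f u ≠ D.f v := fun he => h.ne (D.inj he)
      have hnil : ¬(D.walk h).Nil := fun hn => hfune (Walk.Nil.eq hn)
      obtain ⟨x, h1, q, hw⟩ := (Walk.not_nil_iff).mp hnil
      have hfu : D.f u ∈ B := hFB ⟨u, rfl⟩
      have hfv : D.f v ∈ Set.range D.f := ⟨v, rfl⟩
      have hH1 : ∀ z ∈ (Walk.cons h1 q).support, z ∉ Set.range D.f → ∀ y, H.Adj z y →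
          s(z, y) ∈ (Walk.cons h1 q).edges ∨ y ∈ B := by
        intro z hz hzF y hy
        left
        have := interior_edges D h (x := z) (y := y) (by rw [hw]; exact hz) hzF hy
        rwa [hw] at this
      have hHF : ∀ z ∈ (Walk.cons h1 q).support.tail, z ∈ Set.range D.f → z = D.f v := by
        intro z hz hzF
        exact tail_not_start D h (by rw [hw]; exact hz) hzF
      have hCl' : ∀ z ∈ B, z ∉ Set.range D.f → ∀ y, H.Adj z y → y ∈ B ∪ {x} := by
        intro z hz hzF y hy
        exact Set.mem_union_left _ (hCl z hz hzF y hy)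
      have hpath : (Walk.cons h1 q).IsPath := by rw [← hw]; exact D.isPath h
      obtain ⟨sChain, sF, sB, sSupp, sFin, sCl, sLast, sCard⟩ :=
        sweep_spec (Set.range D.f) n hFfin hFn q h1 B P hpath hBfin hfu hfv hFB
          hH1 hHF hCl' (hP1.trans Set.subset_union_left) (Or.inl hP2)
      have haccw : sweepAcc H B (D.walk h) = sweepAcc H B (Walk.cons h1 q) := by rw [hw]
      have hdsw : sweepDs H B (D.walk h) = sweepDs H B (Walk.cons h1 q) := by rw [hw]
      obtain ⟨bChain, bFin, bF, bCl, bLast, bCard, bMono, bCover⟩ :=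
        ih (sweepAcc H B (D.walk h)) (lastD P (sweepDs H B (D.walk h)))
          (by rw [haccw]; exact sFin) (by rw [haccw]; exact sF)
          (by rw [haccw]; exact sCl) (by rw [haccw, hdsw]; exact sLast)
          (by rw [haccw, hdsw]; exact sCard)
      rw [hbuild]
      refine ⟨?_, bFin, bF, bCl, ?_, ?_, ?_, ?_⟩
      · exact chain_append' (by rw [hdsw]; exact sChain) bChain
      · show lastD P (_ ++ _) ⊆ _
        rw [lastD_append']
        exact bLast
      · rw [lastD_append']
        exact bCard
      · have hBs : B ⊆ sweepAcc H B (D.walk h) := by rw [haccw]; exact sB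
        exact hBs.trans bMono
      · intro p hp hadj z hz
        rcases List.mem_cons.mp hp with rfl | hp
        · have : z ∈ sweepAcc H B (D.walk h) := by
            rw [haccw]
            exact sSupp z (by rw [← hw]; exact hz)
          exact bMono this
        · exact bCover p hp hadj z hz
    · have hbuild : build D ((u, v) :: rest) B = build D rest B := by
        rw [build, dif_neg h]
      obtain ⟨bChain, bFin, bF, bCl, bLast, bCard, bMono, bCover⟩ :=
        ih B P hBfin hFB hCl hP1 hP2
      rw [hbuild]
      refine ⟨bChain, bFin, bF, bCl, bLast, bCard, bMono, ?_⟩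
      intro p hp hadj z hz
      rcases List.mem_cons.mp hp with rfl | hp
      · exact absurd hadj h
      · exact bCover p hp hadj z hz


/-- For every finite simple graph `G`, `in_t(G) ≤ |V(G)| + 2`. -/
theorem topInspectionNumber_le_card {V : Type} [Fintype V] (G : SimpleGraph V) :
    topInspectionNumber G ≤ Fintype.card V + 2 := by
  apply Nat.sInf_le
  simp only [Set.mem_setOf_eq]
  intro W' H hsub
  obtain ⟨D⟩ := hsub
  refine ⟨W', H, ⟨idSubdivision H⟩, Nat.sInf_le ?_⟩
  show SuccessfulSearch H (Fintype.card V + 2)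
  have hFn : (Set.range D.f).ncard ≤ Fintype.card V := by
    rw [← Set.image_univ]
    calc (D.f '' Set.univ).ncard ≤ (Set.univ : Set V).ncard :=
          Set.ncard_image_le Set.finite_univ
      _ = Fintype.card V := by rw [Set.ncard_univ, Nat.card_eq_fintype_card]
  obtain ⟨bChain, bFin, bF, bCl, bLast, bCard, bMono, bCover⟩ :=
    build_spec D (Fintype.card V) (Set.finite_range D.f) hFn (Finset.univ : Finset (V × V)).toList
      (Set.range D.f) ∅ (Set.finite_range D.f) subset_rfl
      (fun z hz hzF => absurd hz hzF) (Set.empty_subset _) (by simpa using hFn)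
  have huniv : (build D (Finset.univ : Finset (V × V)).toList (Set.range D.f)).2 =
      Set.univ := by
    apply Set.eq_univ_of_forall
    intro w
    rcases D.cover_vert w with hw | ⟨u, v, h, hw⟩
    · exact bMono hw
    · exact bCover (u, v) (by simp [Finset.mem_toList]) h w hw
  apply success_of_chain H _
    ((build D (Finset.univ : Finset (V × V)).toList (Set.range D.f)).1 ++ [Set.univ])
  · apply chain_append' bChain
    refine List.chain_cons.mpr ⟨⟨Set.subset_univ _, ?_⟩, List.Chain.nil⟩
    rw [← huniv]
    exact le_trans bCard (by omega)
  · exact lastD_append _ _ _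


end Inspection
end
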